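/- Fix 0 < κ < 1 and define the weight sequence x_0 := κ·√(3/4) and x_n := √((n+1)(n+3))/(n+2) for n ≥ 1. Let ξ be the measure on [0,1] given by ξ := (1−κ^2)·δ_0 + (κ^2/2)·λ + (κ^2/2)·δ_1, where λ is Lebesgue measure on [0,1] and δ_0, δ_1 are Dirac point masses at 0 and 1. Then ξ is a probability measure and for every integer N ≥ 0, ∏_{n=0}^{N−1} x_n^2 = ∫_{[0,1]} s^N dξ(s); equivalently, for N ≥ 1 this common value equals κ^2 (N+2) / (2(N+1)). -/

import Mathlib

open MeasureTheory Filter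

lemma integrable_dirac'' {f : ℝ → ℝ} (a : ℝ) : Integrable f (Measure.dirac a) :=
  (integrable_const (f a)).congr (ae_eq_dirac f).symm

lemma key_integral (N : ℕ) (c₀ c₁ c₂ : ℝ) (h₀ : 0 ≤ c₀) (h₁ : 0 ≤ c₁) (h₂ : 0 ≤ c₂) :
    (∫ s in Set.Icc (0 : ℝ) 1, s ^ N ∂(ENNReal.ofReal c₀ • Measure.dirac 0
        + ENNReal.ofReal c₁ • volume.restrict (Set.Icc (0 : ℝ) 1)
        + ENNReal.ofReal c₂ • Measure.dirac 1))
      = c₀ * (0 : ℝ) ^ N + c₁ * (1 / ((N : ℝ) + 1)) + c₂ := by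
  have hIcc : MeasurableSet (Set.Icc (0 : ℝ) 1) := measurableSet_Icc
  rw [Measure.restrict_add, Measure.restrict_add, Measure.restrict_smul,
    Measure.restrict_smul, Measure.restrict_smul,
    Measure.restrict_restrict hIcc, Set.inter_self,
    restrict_dirac, restrict_dirac]
  have h0 : (0 : ℝ) ∈ Set.Icc (0:ℝ) 1 := by norm_num
  have h1 : (1 : ℝ) ∈ Set.Icc (0:ℝ) 1 := by norm_num
  rw [if_pos h0, if_pos h1]
  have hint : ∀ c : ℝ, ∀ a : ℝ, Integrable (fun s : ℝ => s ^ N)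
      (ENNReal.ofReal c • Measure.dirac a) := fun c a =>
    (integrable_dirac'' a).smul_measure ENNReal.ofReal_ne_top
  have hvol : Integrable (fun s : ℝ => s ^ N)
      (ENNReal.ofReal c₁ • volume.restrict (Set.Icc (0:ℝ) 1)) :=
    ((continuous_pow N).integrableOn_Icc (μ := volume) (a := 0) (b := 1)).integrable.smul_measure ENNReal.ofReal_ne_top
  rw [integral_add_measure ((hint c₀ 0).add_measure hvol) (hint c₂ 1),
    integral_add_measure (hint c₀ 0) hvol,
    integral_smul_measure, integral_smul_measure, integral_smul_measure,
    integral_dirac, integral_dirac]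
  have hI : ∫ s in Set.Icc (0:ℝ) 1, s ^ N = 1 / ((N : ℝ) + 1) := by
    rw [MeasureTheory.integral_Icc_eq_integral_Ioc,
      ← intervalIntegral.integral_of_le (by norm_num : (0:ℝ) ≤ 1), integral_pow]
    simp
  rw [hI, ENNReal.toReal_ofReal h₀, ENNReal.toReal_ofReal h₁, ENNReal.toReal_ofReal h₂]
  simp [smul_eq_mul]

theorem bergman_like_shift_berger_measure
    (κ : ℝ) (hκ0 : 0 < κ) (hκ1 : κ < 1)
    (x : ℕ → ℝ)
    (hx0 : x 0 = κ * Real.sqrt (3 / 4))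
    (hxn : ∀ n : ℕ, 1 ≤ n →
      x n = Real.sqrt (((n : ℝ) + 1) * ((n : ℝ) + 3)) / ((n : ℝ) + 2))
    (ξ : Measure ℝ)
    (hξ : ξ = ENNReal.ofReal (1 - κ ^ 2) • Measure.dirac 0
        + ENNReal.ofReal (κ ^ 2 / 2) • volume.restrict (Set.Icc (0 : ℝ) 1)
        + ENNReal.ofReal (κ ^ 2 / 2) • Measure.dirac 1) :
    IsProbabilityMeasure ξ
      ∧ (∀ N : ℕ,
          (∏ n ∈ Finset.range N, (x n) ^ 2) = ∫ s in Set.Icc (0 : ℝ) 1, s ^ N ∂ξ)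
      ∧ (∀ N : ℕ, 1 ≤ N →
          (∫ s in Set.Icc (0 : ℝ) 1, s ^ N ∂ξ)
            = κ ^ 2 * ((N : ℝ) + 2) / (2 * ((N : ℝ) + 1))) := by
  have hκsq : κ ^ 2 < 1 := by nlinarith
  have h₀ : 0 ≤ 1 - κ ^ 2 := by linarith
  have h₁ : 0 ≤ κ ^ 2 / 2 := by positivity
  -- product formula for N ≥ 1
  have hprod : ∀ N : ℕ, 1 ≤ N →
      (∏ n ∈ Finset.range N, (x n) ^ 2)
        = κ ^ 2 * ((N : ℝ) + 2) / (2 * ((N : ℝ) + 1)) := by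
    intro N hN
    induction N, hN using Nat.le_induction with
    | base =>
      rw [Finset.prod_range_one, hx0, mul_pow,
        Real.sq_sqrt (by norm_num : (3:ℝ)/4 ≥ 0)]
      norm_num
      ring
    | succ N hN ih =>
      rw [Finset.prod_range_succ, ih, hxn N hN, div_pow,
        Real.sq_sqrt (by positivity : (0:ℝ) ≤ ((N : ℝ) + 1) * ((N : ℝ) + 3))]
      have hN1 : ((N : ℝ) + 1) ≠ 0 := by positivity
      have hN2 : ((N : ℝ) + 2) ≠ 0 := by positivity
      push_cast
      field_simp
      ring
  -- the integral formula
  have hint : ∀ N : ℕ, (∫ s in Set.Icc (0 : ℝ) 1, s ^ N ∂ξ)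
      = (1 - κ ^ 2) * (0 : ℝ) ^ N + (κ ^ 2 / 2) * (1 / ((N : ℝ) + 1)) + κ ^ 2 / 2 := by
    intro N
    rw [hξ]
    exact key_integral N _ _ _ h₀ h₁ h₁
  have hint' : ∀ N : ℕ, 1 ≤ N → (∫ s in Set.Icc (0 : ℝ) 1, s ^ N ∂ξ)
      = κ ^ 2 * ((N : ℝ) + 2) / (2 * ((N : ℝ) + 1)) := by
    intro N hN
    rw [hint N, zero_pow (Nat.one_le_iff_ne_zero.mp hN)]
    have hN1 : ((N : ℝ) + 1) ≠ 0 := by positivity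
    field_simp
    ring
  refine ⟨?_, ?_, hint'⟩
  · constructor
    rw [hξ]
    simp only [Measure.add_apply, Measure.smul_apply, smul_eq_mul,
      Measure.dirac_apply_of_mem (Set.mem_univ _), Measure.restrict_apply MeasurableSet.univ,
      Set.univ_inter, Real.volume_Icc, mul_one]
    rw [show (1:ℝ) - 0 = 1 by norm_num, ENNReal.ofReal_one, mul_one,
      ← ENNReal.ofReal_add h₀ h₁, ← ENNReal.ofReal_add (by linarith) h₁,
      show (1:ℝ) - κ^2 + κ^2/2 + κ^2/2 = 1 by ring, ENNReal.ofReal_one]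
  · intro N
    rcases Nat.eq_zero_or_pos N with h | h
    · subst h
      rw [hint 0]
      simp
      ring
    · rw [hprod N h, hint' N h]
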